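/- Let $k \in \mathbb{N}$ be odd and $h \in \mathbb{Z}$ with $\gcd(h,k)=1$. Then the Hardy sum $s_3(h,k) = \sum_{a=0}^{k-1} (-1)^a ((ah/k))$ satisfies $s_3(h,k) = \frac{1}{2k} \sum_{a=1}^{k-1} \tan(\pi a h/k) \cot(\pi a/k)$. -/

import Mathlib

open scoped Classical

/-- The sawtooth function `((x))`. -/
noncomputable def saw (x : ℝ) : ℝ :=
  if ∃ m : ℤ, x = m then 0 else Int.fract x - 1 / 2

/-- The cotangent function. -/
noncomputable def cot (x : ℝ) : ℝ := Real.cos x / Real.sin x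

open scoped Real
open Finset

private lemma cos_ne_zero_of_odd (k : ℕ) (hk : 0 < k) (hko : Odd k) (n : ℤ) :
    Real.cos (π * n / k) ≠ 0 := by
  intro hc
  rw [Real.cos_eq_zero_iff] at hc
  obtain ⟨m, hm⟩ := hc
  have hk0 : (k : ℝ) ≠ 0 := by positivity
  have hpi : (π : ℝ) ≠ 0 := Real.pi_ne_zero
  have : (2 * n : ℝ) = (2 * m + 1) * k := by
    field_simp at hm
    have := mul_left_cancel₀ hpi (show π * (2 * (n:ℝ)) = π * ((2*m+1)*k) by rw [show (2 * (n:ℝ)) = (2*m+1)*k by linarith])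
    linarith
  have hz : (2 * n : ℤ) = (2 * m + 1) * k := by exact_mod_cast this
  have hok : Odd ((2*m+1)*k : ℤ) := Odd.mul ⟨m, by ring⟩ (by exact_mod_cast hko)
  obtain ⟨c, hc⟩ := hok
  omega

private lemma alt_sin_sum (k : ℕ) (hk : 0 < k) (hko : Odd k) (n : ℤ) :
    ∑ a ∈ range k, (-1:ℝ)^a * Real.sin (2 * π * a * n / k)
      = - Real.tan (π * n / k) := by
  have hk0 : (k : ℝ) ≠ 0 := by positivity
  set θ : ℝ := 2 * π * n / k with hθ
  have hargs : ∀ a : ℕ, 2 * π * (a:ℝ) * n / k = a * θ := by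
    intro a; rw [hθ]; ring
  have hcos : Real.cos (θ/2) ≠ 0 := by
    have : θ/2 = π * n / k := by rw [hθ]; ring
    rw [this]; exact cos_ne_zero_of_odd k hk hko n
  set g : ℕ → ℝ := fun a => (1/2) * (-1)^a * Real.sin (a * θ - θ/2) with hg
  have key : ∀ a : ℕ, (-1:ℝ)^a * Real.sin (a * θ) * Real.cos (θ/2)
      = g a - g (a+1) := by
    intro a
    have e1 : ((a:ℝ)+1) * θ - θ/2 = a*θ + θ/2 := by ring
    have e2 : (a:ℝ) * θ - θ/2 = a*θ - θ/2 := by ring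
    simp only [hg, pow_succ]
    push_cast
    rw [e1, Real.sin_add, Real.sin_sub]
    ring
  have tele : ∑ a ∈ range k, ((-1:ℝ)^a * Real.sin (a * θ) * Real.cos (θ/2))
      = g 0 - g k := by
    rw [Finset.sum_congr rfl (fun a _ => key a)]
    exact Finset.sum_range_sub' g k
  have hg0 : g 0 = -(1/2) * Real.sin (θ/2) := by
    simp only [hg, pow_zero, Nat.cast_zero, one_mul]
    rw [show (0:ℝ) * θ - θ/2 = -(θ/2) by ring, Real.sin_neg]
    ring
  have hgk : g k = (1/2) * Real.sin (θ/2) := by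
    have hk1 : ((-1:ℝ))^k = -1 := Odd.neg_one_pow hko
    have : (k:ℝ) * θ - θ/2 = -(θ/2) + n * (2*π) := by
      rw [hθ]; field_simp; ring
    rw [hg]
    simp only
    rw [this, Real.sin_add_int_mul_two_pi, Real.sin_neg, hk1]
    ring
  have main : (∑ a ∈ range k, (-1:ℝ)^a * Real.sin (a * θ)) * Real.cos (θ/2)
      = - Real.sin (θ/2) := by
    rw [Finset.sum_mul, tele, hg0, hgk]; ring
  have : ∑ a ∈ range k, (-1:ℝ)^a * Real.sin (a * θ)
      = - (Real.sin (θ/2) / Real.cos (θ/2)) := by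
    field_simp
    linarith [main]
  rw [Finset.sum_congr rfl (fun a _ => by rw [hargs a]), this]
  rw [show θ/2 = π * n / k by rw [hθ]; ring, Real.tan_eq_sin_div_cos]

private lemma dirichlet (θ : ℝ) (j : ℕ) :
    Real.sin ((2*(j:ℝ)+1)*θ)
      = Real.sin θ * (1 + 2 * ∑ l ∈ Icc 1 j, Real.cos (2*(l:ℝ)*θ)) := by
  induction j with
  | zero => simp
  | succ j ih =>
    rw [Finset.sum_Icc_succ_top (by omega : 1 ≤ j+1)]
    have e1 : (2*((j:ℝ)+1)+1)*θ = (2*(j:ℝ)+2)*θ + θ := by ring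
    have e2 : (2*(j:ℝ)+1)*θ = (2*(j:ℝ)+2)*θ - θ := by ring
    have e3 : 2*((j:ℝ)+1)*θ = (2*(j:ℝ)+2)*θ := by ring
    push_cast
    rw [e1, Real.sin_add, e3]
    rw [e2, Real.sin_sub] at ih
    nlinarith [ih]

private lemma cos_sum_zero (k l : ℕ) (h1 : 1 ≤ l) (h2 : l < k) :
    ∑ m ∈ range k, Real.cos (2*π*(l:ℝ)*m/k) = 0 := by
  have hk0 : (k : ℝ) ≠ 0 := Nat.cast_ne_zero.mpr (by omega)
  set z : ℂ := Complex.exp (2*π*(l:ℝ)/k * Complex.I) with hz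
  have hzpow : ∀ m : ℕ, z ^ m = Complex.exp ((2*π*(l:ℝ)*m/k : ℝ) * Complex.I) := by
    intro m
    rw [hz, ← Complex.exp_nat_mul]
    congr 1
    push_cast
    ring
  have hre : ∀ m : ℕ, (z ^ m).re = Real.cos (2*π*(l:ℝ)*m/k) := by
    intro m
    rw [hzpow m, Complex.exp_ofReal_mul_I_re]
  have hz1 : z ≠ 1 := by
    rw [hz]
    intro hc
    rw [Complex.exp_eq_one_iff] at hc
    obtain ⟨n, hn⟩ := hc
    have hr : 2*π*(l:ℝ)/k = (n:ℝ)*(2*π) := by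
      have him := congrArg Complex.im hn
      simpa using him
    have hpi : (0:ℝ) < π := Real.pi_pos
    have : (l : ℝ) = n * k := by
      field_simp at hr
      nlinarith [hr]
    have hzz : (l : ℤ) = n * k := by exact_mod_cast this
    have : (k : ℤ) ∣ l := ⟨n, by linarith [hzz]⟩
    have : (k : ℕ) ∣ l := by exact_mod_cast this
    have := Nat.le_of_dvd (by omega) this
    omega
  have hzk : z ^ k = 1 := by
    rw [hzpow k]
    have : (2*π*(l:ℝ)*k/k : ℝ) = 2*π*l := by field_simp
    rw [this]
    have : ((2*π*(l:ℝ) : ℝ) : ℂ) * Complex.I = (l:ℤ) * (2*π*Complex.I) := by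
      push_cast; ring
    rw [this, Complex.exp_int_mul_two_pi_mul_I]
  have hsum : ∑ m ∈ range k, z ^ m = 0 := by
    rw [geom_sum_eq hz1, hzk]
    simp
  calc ∑ m ∈ range k, Real.cos (2*π*(l:ℝ)*m/k)
      = ∑ m ∈ range k, (z ^ m).re := by
        exact Finset.sum_congr rfl (fun m _ => (hre m).symm)
    _ = (∑ m ∈ range k, z ^ m).re := by rw [Complex.re_sum]
    _ = 0 := by rw [hsum]; rfl

private lemma sin_pos_of_mem (k m : ℕ) (hm : m ∈ Icc 1 (k-1)) (hk : 0 < k) :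
    0 < Real.sin (π*(m:ℝ)/k) := by
  rw [Finset.mem_Icc] at hm
  have h1 : (1:ℝ) ≤ m := by exact_mod_cast hm.1
  have h2 : (m:ℝ) < k := by
    have : m < k := by omega
    exact_mod_cast this
  have hk0 : (0:ℝ) < k := by exact_mod_cast hk
  apply Real.sin_pos_of_pos_of_lt_pi
  · positivity
  · rw [div_lt_iff₀ hk0]
    nlinarith [Real.pi_pos]

private lemma icc_sum_cos (k l : ℕ) (hk : 0 < k) (h1 : 1 ≤ l) (h2 : l ≤ k-1) :
    ∑ m ∈ Icc 1 (k-1), Real.cos (2*π*(l:ℝ)*m/k) = -1 := by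
  have hrange : range k = insert 0 (Icc 1 (k-1)) := by
    ext x; simp [Finset.mem_range, Finset.mem_insert, Finset.mem_Icc]; omega
  have h0 : (0:ℕ) ∉ Icc 1 (k-1) := by simp
  have := cos_sum_zero k l h1 (by omega)
  rw [hrange, Finset.sum_insert h0] at this
  have hc0 : Real.cos (2*π*(l:ℝ)*(0:ℕ)/k) = 1 := by
    norm_num
  rw [hc0] at this
  linarith

private lemma Dsum (k j : ℕ) (hk : 0 < k) (hj : j ≤ k-1) :
    ∑ m ∈ Icc 1 (k-1), Real.sin ((2*(j:ℝ)+1) * (π*(m:ℝ)/k)) / Real.sin (π*(m:ℝ)/k)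
      = (k:ℝ) - 1 - 2*j := by
  have step : ∀ m ∈ Icc 1 (k-1),
      Real.sin ((2*(j:ℝ)+1) * (π*(m:ℝ)/k)) / Real.sin (π*(m:ℝ)/k)
        = 1 + 2 * ∑ l ∈ Icc 1 j, Real.cos (2*(l:ℝ)*(π*(m:ℝ)/k)) := by
    intro m hm
    have hs := sin_pos_of_mem k m hm hk
    rw [dirichlet (π*(m:ℝ)/k) j, mul_comm, mul_div_assoc, div_self (ne_of_gt hs), mul_one]
  rw [Finset.sum_congr rfl step]
  rw [Finset.sum_add_distrib]
  have hcard : ∑ m ∈ Icc 1 (k-1), (1:ℝ) = (k:ℝ) - 1 := by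
    rw [Finset.sum_const, Nat.card_Icc]
    have : k - 1 + 1 - 1 = k - 1 := by omega
    rw [this]
    have : ((k-1 : ℕ) : ℝ) = (k:ℝ) - 1 := by
      push_cast [Nat.cast_sub (by omega : 1 ≤ k)]; ring
    simp [this]
  rw [hcard]
  have hswap : ∑ m ∈ Icc 1 (k-1), (2:ℝ) * ∑ l ∈ Icc 1 j, Real.cos (2*(l:ℝ)*(π*(m:ℝ)/k))
      = 2 * ∑ l ∈ Icc 1 j, ∑ m ∈ Icc 1 (k-1), Real.cos (2*(l:ℝ)*(π*(m:ℝ)/k)) := by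
    rw [← Finset.mul_sum, Finset.sum_comm]
  rw [hswap]
  have inner : ∀ l ∈ Icc 1 j, ∑ m ∈ Icc 1 (k-1), Real.cos (2*(l:ℝ)*(π*(m:ℝ)/k)) = -1 := by
    intro l hl
    rw [Finset.mem_Icc] at hl
    have := icc_sum_cos k l hk hl.1 (by omega)
    rw [← this]
    exact Finset.sum_congr rfl (fun m _ => by congr 1; ring)
  rw [Finset.sum_congr rfl inner, Finset.sum_const, Nat.card_Icc]
  simp
  ring

private lemma cot_sin_sum (k j : ℕ) (hk : 0 < k) (h1 : 1 ≤ j) (h2 : j ≤ k-1) :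
    ∑ m ∈ Icc 1 (k-1), cot (π*(m:ℝ)/k) * Real.sin (2*π*(m:ℝ)*j/k)
      = (k:ℝ) - 2*j := by
  have step : ∀ m ∈ Icc 1 (k-1),
      cot (π*(m:ℝ)/k) * Real.sin (2*π*(m:ℝ)*j/k)
        = (Real.sin ((2*(j:ℝ)+1) * (π*(m:ℝ)/k)) / Real.sin (π*(m:ℝ)/k)
          + Real.sin ((2*((j-1:ℕ):ℝ)+1) * (π*(m:ℝ)/k)) / Real.sin (π*(m:ℝ)/k)) / 2 := by
    intro m hm
    have hs := sin_pos_of_mem k m hm hk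
    have hs0 : Real.sin (π*(m:ℝ)/k) ≠ 0 := ne_of_gt hs
    set θ : ℝ := π*(m:ℝ)/k with hθ
    have hj1 : ((j-1:ℕ):ℝ) = (j:ℝ) - 1 := by
      push_cast [Nat.cast_sub (by omega : 1 ≤ j)]; ring
    have e1 : (2*(j:ℝ)+1) * θ = 2*(j:ℝ)*θ + θ := by ring
    have e2 : (2*((j-1:ℕ):ℝ)+1) * θ = 2*(j:ℝ)*θ - θ := by rw [hj1]; ring
    have e3 : 2*π*(m:ℝ)*j/k = 2*(j:ℝ)*θ := by rw [hθ]; ring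
    rw [cot, e1, e2, e3, Real.sin_add, Real.sin_sub]
    field_simp
    ring
  rw [Finset.sum_congr rfl step]
  rw [← Finset.sum_div, Finset.sum_add_distrib]
  rw [Dsum k j hk h2, Dsum k (j-1) hk (by omega)]
  have hj1 : ((j-1:ℕ):ℝ) = (j:ℝ) - 1 := by
    push_cast [Nat.cast_sub (by omega : 1 ≤ j)]; ring
  rw [hj1]
  ring

private lemma saw_formula (k : ℕ) (hk : 0 < k) (n : ℤ) (hn : ¬ (k:ℤ) ∣ n) :
    saw ((n:ℝ)/k)
      = -(1/(2*(k:ℝ))) * ∑ m ∈ Icc 1 (k-1), cot (π*(m:ℝ)/k) * Real.sin (2*π*(m:ℝ)*n/k) := by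
  have hk0 : (k:ℝ) ≠ 0 := Nat.cast_ne_zero.mpr (by omega)
  have hkpos : (0:ℝ) < k := by exact_mod_cast hk
  set q : ℤ := n / k with hq
  set r : ℕ := (n % k).toNat with hr
  have hmod : 0 ≤ n % k := Int.emod_nonneg n (by exact_mod_cast (by omega : (k:ℤ) ≠ 0))
  have hmodlt : n % k < k := Int.emod_lt_of_pos n (by exact_mod_cast hk)
  have hrne : n % k ≠ 0 := fun hc => hn (Int.dvd_of_emod_eq_zero hc)
  have hr1 : 1 ≤ r := by omega
  have hrk : r ≤ k - 1 := by omega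
  have hrz : (r:ℤ) = n % k := Int.toNat_of_nonneg hmod
  have hnqr : n = k * q + (r:ℤ) := by
    rw [hrz, hq]
    linarith [Int.mul_ediv_add_emod n k]
  have hnr : (n:ℝ) = k * q + r := by exact_mod_cast hnqr
  have hfrac : (n:ℝ)/k = q + (r:ℝ)/k := by
    rw [hnr]; field_simp
  have hrange : 0 ≤ (r:ℝ)/k ∧ (r:ℝ)/k < 1 := by
    constructor
    · positivity
    · rw [div_lt_one hkpos]
      exact_mod_cast (by omega : r < k)
  have hnotint : ¬ ∃ m : ℤ, (n:ℝ)/k = m := by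
    rintro ⟨m, hm⟩
    apply hn
    refine ⟨m, ?_⟩
    have : (n:ℝ) = k * m := by
      field_simp at hm
      linarith [hm]
    exact_mod_cast this
  have hsaw : saw ((n:ℝ)/k) = (r:ℝ)/k - 1/2 := by
    rw [saw, if_neg hnotint, hfrac, Int.fract_intCast_add, Int.fract_eq_self.mpr hrange]
  have hsin : ∀ m ∈ Icc 1 (k-1),
      Real.sin (2*π*(m:ℝ)*n/k) = Real.sin (2*π*(m:ℝ)*r/k) := by
    intro m _
    have : 2*π*(m:ℝ)*n/k = 2*π*(m:ℝ)*r/k + ((m:ℤ)*q : ℤ) * (2*π) := by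
      rw [hnr]; push_cast; field_simp; ring
    rw [this, Real.sin_add_int_mul_two_pi]
  rw [hsaw]
  rw [Finset.sum_congr rfl (fun m hm => by rw [hsin m hm])]
  rw [cot_sin_sum k r hk hr1 hrk]
  field_simp
  ring

theorem hardy_s3 (k : ℕ) (hk : 0 < k) (hko : Odd k) (h : ℤ) (hco : Int.gcd h k = 1) :
    ∑ a ∈ Finset.range k, (-1 : ℝ) ^ a * saw (a * (h : ℝ) / k)
      = 1 / (2 * k) *
          ∑ a ∈ Finset.Icc 1 (k - 1),
            Real.tan (Real.pi * a * (h : ℝ) / k) * cot (Real.pi * a / k) := by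
  have hk0 : (k:ℝ) ≠ 0 := Nat.cast_ne_zero.mpr (by omega)
  -- Step 1: apply the saw formula termwise
  have key : ∀ a ∈ range k,
      (-1:ℝ)^a * saw ((a:ℝ) * h / k)
        = (-1:ℝ)^a * (-(1/(2*(k:ℝ))) *
            ∑ m ∈ Icc 1 (k-1), cot (π*(m:ℝ)/k) * Real.sin (2*π*(m:ℝ)*((a:ℤ)*h : ℤ)/k)) := by
    intro a ha
    rw [Finset.mem_range] at ha
    congr 1
    rcases Nat.eq_zero_or_pos a with h0 | hpos
    · subst h0
      have h1 : saw ((0:ℕ) * (h:ℝ) / k) = 0 := by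
        rw [show ((0:ℕ):ℝ) * (h:ℝ) / k = ((0:ℤ):ℝ) by norm_num, saw]
        rw [if_pos ⟨0, rfl⟩]
      rw [h1]
      have h2 : ∀ m ∈ Icc 1 (k-1),
          cot (π*(m:ℝ)/k) * Real.sin (2*π*(m:ℝ)*(((0:ℕ):ℤ)*h : ℤ)/k) = 0 := by
        intro m _
        have : (2*π*(m:ℝ)*(((((0:ℕ):ℤ)*h : ℤ)):ℝ)/k) = 0 := by push_cast; ring
        rw [this, Real.sin_zero, mul_zero]
      rw [Finset.sum_congr rfl h2]
      simp
    · have hnd : ¬ (k:ℤ) ∣ ((a:ℤ)*h) := by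
        intro hd
        have hcop : Int.gcd (k:ℤ) (h:ℤ) = 1 := by
          rw [Int.gcd_comm]
          simpa using hco
        have hka : (k:ℤ) ∣ (a:ℤ) :=
          Int.dvd_of_dvd_mul_left_of_gcd_one hd hcop
        have : (k:ℕ) ∣ a := by exact_mod_cast hka
        have := Nat.le_of_dvd hpos this
        omega
      have := saw_formula k hk ((a:ℤ)*h) hnd
      have harg : (a:ℝ) * h / k = ((((a:ℤ)*h : ℤ)):ℝ)/k := by push_cast; ring
      rw [harg, this]
  rw [Finset.sum_congr rfl key]
  -- Step 2: rearrange the double sum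
  have e1 : ∀ a : ℕ, (-1:ℝ)^a * (-(1/(2*(k:ℝ))) *
        ∑ m ∈ Icc 1 (k-1), cot (π*(m:ℝ)/k) * Real.sin (2*π*(m:ℝ)*((a:ℤ)*h : ℤ)/k))
      = ∑ m ∈ Icc 1 (k-1), -(1/(2*(k:ℝ))) *
          (cot (π*(m:ℝ)/k) * ((-1:ℝ)^a * Real.sin (2*π*(a:ℝ)*(((m:ℤ)*h : ℤ):ℝ)/k))) := by
    intro a
    rw [Finset.mul_sum, Finset.mul_sum]
    apply Finset.sum_congr rfl
    intro m _
    rw [show 2*π*(m:ℝ)*((((a:ℤ)*h : ℤ)):ℝ)/k = 2*π*(a:ℝ)*(((((m:ℤ)*h : ℤ)):ℝ))/k by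
      push_cast; ring]
    ring
  rw [Finset.sum_congr rfl (fun a _ => e1 a), Finset.sum_comm]
  have e2 : ∀ m : ℕ, m ∈ Icc 1 (k-1) →
      ∑ a ∈ range k, -(1/(2*(k:ℝ))) *
          (cot (π*(m:ℝ)/k) * ((-1:ℝ)^a * Real.sin (2*π*(a:ℝ)*(((m:ℤ)*h : ℤ):ℝ)/k)))
        = 1/(2*(k:ℝ)) * (Real.tan (π * (m:ℝ) * h / k) * cot (π*(m:ℝ)/k)) := by
    intro m _
    rw [← Finset.mul_sum, ← Finset.mul_sum]
    rw [alt_sin_sum k hk hko ((m:ℤ)*h)]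
    rw [show π * ((((m:ℤ)*h : ℤ)):ℝ) / k = π * (m:ℝ) * h / k by push_cast; ring]
    ring
  rw [Finset.sum_congr rfl e2, ← Finset.mul_sum]
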